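/- Let n ≥ 1 and m ≥ 2 be integers and let ℛ ⊆ 𝒬(n,m). Then card(𝒜_0(ℛ)) ≤ card(𝒜_n(ℛ)). -/

import Mathlib

/-- `𝒜_k(ℛ)` for `ℛ ⊆ 𝒬(n,m)`: the set of colorings `c : {1,…,n} → {1,…,m}` (0-indexed
here, the paper's index `i ∈ {1,…,n}` corresponds to `i : Fin n` with `i+1 ≤ k` i.e.
`(i:ℕ) < k`, and the paper's color `1` corresponds to `(0 : Fin m)`, i.e. value `0`) for
which there exists `R ∈ ℛ` such that for all colors `a` and all `i ∈ R_a`, `c i = a` when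
`i ≤ k` and `c i = 1` when `i > k`. -/
def Ak (n m : ℕ) (Rcal : Set (Fin m → Finset (Fin n))) (k : ℕ) : Set (Fin n → Fin m) :=
  {c | ∃ R ∈ Rcal, ∀ a : Fin m, ∀ i ∈ R a, if (i : ℕ) < k then c i = a else ((c i) : ℕ) = 0}

theorem Ak_step (n m : ℕ) (hm : 2 ≤ m)
    (Rcal : Set (Fin m → Finset (Fin n)))
    (hdisj : ∀ R ∈ Rcal, ∀ a b : Fin m, a ≠ b → Disjoint (R a) (R b))
    (k : ℕ) (hk : k < n) :
    (Ak n m Rcal k).ncard ≤ (Ak n m Rcal (k+1)).ncard := by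
  classical
  have hmz : NeZero m := ⟨by omega⟩
  set κ : Fin n := ⟨k, hk⟩ with hκ
  have hne : ∀ i : Fin n, i ≠ κ → (i : ℕ) ≠ k := by
    intro i hi h
    exact hi (Fin.ext h)
  -- Lemma C: if R witnesses c ∈ A_k and R avoids κ, any c' agreeing with c off κ is in A_{k+1}
  have lemC : ∀ (R : Fin m → Finset (Fin n)) (c c' : Fin n → Fin m), R ∈ Rcal →
      (∀ a : Fin m, ∀ i ∈ R a, if (i:ℕ) < k then c i = a else ((c i):ℕ) = 0) →
      (∀ a, κ ∉ R a) → (∀ i, i ≠ κ → c' i = c i) → c' ∈ Ak n m Rcal (k+1) := by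
    intro R c c' hR hcond hκR hagree
    refine ⟨R, hR, ?_⟩
    intro a i hi
    have hiκ : i ≠ κ := by rintro rfl; exact hκR a hi
    have h1 : c' i = c i := hagree i hiκ
    have h2 := hcond a i hi
    have h3 : ((i:ℕ) < k) ↔ ((i:ℕ) < k+1) := by
      have := hne i hiκ; omega
    by_cases hlt : (i:ℕ) < k
    · simp only [if_pos hlt] at h2
      simp only [if_pos (h3.mp hlt), h1, h2]
    · simp only [if_neg hlt] at h2
      simp only [if_neg (h3.not.mp hlt), h1, h2]
  -- zero lemma: c ∈ A_k \ A_{k+1} → (c κ : ℕ) = 0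
  have lemZ : ∀ c ∈ Ak n m Rcal k, c ∉ Ak n m Rcal (k+1) → ((c κ : ℕ) = 0) := by
    intro c hc hc'
    obtain ⟨R, hR, hcond⟩ := hc
    by_cases hcov : ∃ a, κ ∈ R a
    · obtain ⟨a, ha⟩ := hcov
      have := hcond a κ ha
      simpa [hκ] using this
    · push_neg at hcov
      exact absurd (lemC R c c hR hcond hcov (fun _ _ => rfl)) hc'
  -- key lemma: existence of a nonzero recoloring
  have key : ∀ c ∈ Ak n m Rcal k, c ∉ Ak n m Rcal (k+1) →
      ∃ a : Fin m, (a:ℕ) ≠ 0 ∧ Function.update c κ a ∈ Ak n m Rcal (k+1) := by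
    intro c hc hc'
    obtain ⟨R, hR, hcond⟩ := hc
    by_cases hcov : ∃ a, κ ∈ R a
    · obtain ⟨a, ha⟩ := hcov
      refine ⟨a, ?_, ?_⟩
      · -- a ≠ 0, else c itself would be in A_{k+1}
        intro ha0
        apply hc'
        refine ⟨R, hR, ?_⟩
        intro b i hi
        by_cases hiκ : i = κ
        · subst hiκ
          have hb : b = a := by
            by_contra hba
            exact absurd ha (Finset.disjoint_left.mp (hdisj R hR b a hba) hi)
          have h0 : ((c κ : ℕ)) = 0 := by
            have := hcond a κ ha; simpa [hκ] using this
          have hlt : ((κ:ℕ)) < k + 1 := by simp [hκ]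
          simp only [if_pos hlt, hb]
          apply Fin.ext
          simp [h0, ha0]
        · have h2 := hcond b i hi
          have h3 : ((i:ℕ) < k) ↔ ((i:ℕ) < k+1) := by
            have := hne i hiκ; omega
          by_cases hlt : (i:ℕ) < k
          · simp only [if_pos hlt] at h2; simp only [if_pos (h3.mp hlt), h2]
          · simp only [if_neg hlt] at h2; simp only [if_neg (h3.not.mp hlt), h2]
      · refine ⟨R, hR, ?_⟩
        intro b i hi
        by_cases hiκ : i = κ
        · subst hiκ
          have hb : b = a := by
            by_contra hba
            exact absurd ha (Finset.disjoint_left.mp (hdisj R hR b a hba) hi)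
          have hlt : ((κ:ℕ)) < k + 1 := by simp [hκ]
          simp only [if_pos hlt, hb, Function.update_self]
        · have h2 := hcond b i hi
          have h3 : ((i:ℕ) < k) ↔ ((i:ℕ) < k+1) := by
            have := hne i hiκ; omega
          have hupd : Function.update c κ a i = c i := Function.update_of_ne hiκ a c
          by_cases hlt : (i:ℕ) < k
          · simp only [if_pos hlt] at h2; simp only [if_pos (h3.mp hlt), hupd, h2]
          · simp only [if_neg hlt] at h2; simp only [if_neg (h3.not.mp hlt), hupd, h2]
    · push_neg at hcov
      exact absurd (lemC R c c hR hcond hcov (fun _ _ => rfl)) hc'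
  choose g hg0 hg1 using key
  -- define f
  let f : (Fin n → Fin m) → (Fin n → Fin m) := fun c =>
    if h1 : c ∈ Ak n m Rcal (k+1) then c
    else if h2 : c ∈ Ak n m Rcal k then Function.update c κ (g c h2 h1) else c
  have hmaps : ∀ c ∈ Ak n m Rcal k, f c ∈ Ak n m Rcal (k+1) := by
    intro c hc
    by_cases h1 : c ∈ Ak n m Rcal (k+1)
    · simp only [f, dif_pos h1]; exact h1
    · simp only [f, dif_neg h1, dif_pos hc]; exact hg1 c hc h1
  have hinj : Set.InjOn f (Ak n m Rcal k) := by
    intro c1 hc1 c2 hc2 hfe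
    by_cases h1 : c1 ∈ Ak n m Rcal (k+1) <;> by_cases h2 : c2 ∈ Ak n m Rcal (k+1)
    · simpa only [f, dif_pos h1, dif_pos h2] using hfe
    · -- c1 ∈ A_{k+1}, c2 ∉: f c1 = c1 = update c2 κ a2; contradiction
      exfalso
      simp only [f, dif_pos h1, dif_neg h2, dif_pos hc2] at hfe
      set a2 := g c2 hc2 h2 with ha2
      obtain ⟨R, hR, hcond⟩ := hc1
      by_cases hcov : ∃ a, κ ∈ R a
      · obtain ⟨a, ha⟩ := hcov
        have h0 : ((c1 κ : ℕ)) = 0 := by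
          have := hcond a κ ha; simpa [hκ] using this
        have : c1 κ = a2 := by rw [hfe]; simp
        rw [this] at h0
        exact hg0 c2 hc2 h2 h0
      · push_neg at hcov
        refine h2 (lemC R c1 c2 hR hcond hcov ?_)
        intro i hi
        have : c1 i = Function.update c2 κ a2 i := by rw [hfe]
        rw [this, Function.update_of_ne hi]
    · -- symmetric
      exfalso
      simp only [f, dif_pos h2, dif_neg h1, dif_pos hc1] at hfe
      set a1 := g c1 hc1 h1 with ha1
      obtain ⟨R, hR, hcond⟩ := hc2
      by_cases hcov : ∃ a, κ ∈ R a
      · obtain ⟨a, ha⟩ := hcov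
        have h0 : ((c2 κ : ℕ)) = 0 := by
          have := hcond a κ ha; simpa [hκ] using this
        have : c2 κ = a1 := by rw [← hfe]; simp
        rw [this] at h0
        exact hg0 c1 hc1 h1 h0
      · push_neg at hcov
        refine h1 (lemC R c2 c1 hR hcond hcov ?_)
        intro i hi
        have : Function.update c1 κ a1 i = c2 i := by rw [hfe]
        rw [← this, Function.update_of_ne hi]
    · -- both not in A_{k+1}
      simp only [f, dif_neg h1, dif_neg h2, dif_pos hc1, dif_pos hc2] at hfe
      have hz1 := lemZ c1 hc1 h1
      have hz2 := lemZ c2 hc2 h2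
      funext i
      by_cases hi : i = κ
      · subst hi
        apply Fin.ext
        rw [hz1, hz2]
      · have := congrFun hfe i
        rwa [Function.update_of_ne hi, Function.update_of_ne hi] at this
  exact Set.ncard_le_ncard_of_injOn f hmaps hinj (Set.toFinite _)


/-- Let n ≥ 1 and m ≥ 2 be integers and let ℛ ⊆ 𝒬(n,m) (a set of m-tuples of
pairwise disjoint subsets of {1,…,n}). Then card(𝒜_0(ℛ)) ≤ card(𝒜_n(ℛ)). -/
theorem stmt7 (n m : ℕ) (hn : 1 ≤ n) (hm : 2 ≤ m)
    (Rcal : Set (Fin m → Finset (Fin n)))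
    (hdisj : ∀ R ∈ Rcal, ∀ a b : Fin m, a ≠ b → Disjoint (R a) (R b)) :
    (Ak n m Rcal 0).ncard ≤ (Ak n m Rcal n).ncard := by
  have main : ∀ j, j ≤ n → (Ak n m Rcal 0).ncard ≤ (Ak n m Rcal j).ncard := by
    intro j
    induction j with
    | zero => intro _; exact le_rfl
    | succ j ih =>
      intro hj
      exact (ih (by omega)).trans (Ak_step n m hm Rcal hdisj j (by omega))
  exact main n le_rfl
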